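/- For every x ∈ Σ_A^*, the characteristic function χ_{[x]} of the cylinder set [x] is a finite (complex) linear combination of elements of the Haar family 𝓗. -/

import Mathlib

open MeasureTheory Filter
open scoped ENNReal NNReal

namespace SFT

variable {l : ℕ}

/-- The one-sided subshift of finite type determined by the `l × l` matrix `A`:
infinite sequences with transitions allowed by `A`. -/
abbrev SigmaA (l : ℕ) (A : Matrix (Fin l) (Fin l) ℕ) : Type :=
  {ω : ℕ → Fin l // ∀ k, A (ω k) (ω (k + 1)) = 1}

/-- The left shift `σ` on `SigmaA l A`. -/
def shift {A : Matrix (Fin l) (Fin l) ℕ} (ω : SigmaA l A) : SigmaA l A :=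
  ⟨fun n => ω.1 (n + 1), fun k => ω.2 (k + 1)⟩

/-- Birkhoff sums `S_k φ = ∑_{m<k} φ ∘ σ^m`. -/
def birkhoff {A : Matrix (Fin l) (Fin l) ℕ} (φ : SigmaA l A → ℝ) (k : ℕ) (ω : SigmaA l A) : ℝ :=
  ∑ m ∈ Finset.range k, φ (shift^[m] ω)

/-- The matrix `A` has `0`-`1` entries and is irreducible and aperiodic
(some power of `A` has all entries strictly positive). -/
def Primitive (A : Matrix (Fin l) (Fin l) ℕ) : Prop :=
  (∀ i j, A i j = 0 ∨ A i j = 1) ∧ ∃ n : ℕ, 0 < n ∧ ∀ i j, 0 < (A ^ n) i j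

/-- A finite word is admissible, i.e. belongs to `Σ_A^*`. -/
def Admissible (A : Matrix (Fin l) (Fin l) ℕ) (x : List (Fin l)) : Prop :=
  x ≠ [] ∧ ∀ (i : ℕ) (h : i + 1 < x.length), A (x[i]'(by omega)) (x[i + 1]'h) = 1

/-- The cylinder set `[x]` of a finite word (the empty word gives all of `Σ_A`). -/
def cylinder (A : Matrix (Fin l) (Fin l) ℕ) (x : List (Fin l)) : Set (SigmaA l A) :=
  {ω | ∀ (i : ℕ) (h : i < x.length), ω.1 i = x[i]'h}

/-- The initial word `(ω_1, …, ω_k)` of `ω`. -/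
def wordPrefix {A : Matrix (Fin l) (Fin l) ℕ} (ω : SigmaA l A) (k : ℕ) : List (Fin l) :=
  List.ofFn (fun i : Fin k => ω.1 i)

/-- `μ` is a Gibbs measure for the potential `φ` with pressure `P`:
`c⁻¹ ≤ μ([ω_1,…,ω_k]) / exp(S_kφ(ω) − kP) ≤ c` for some `c > 1`. -/
def IsGibbs {A : Matrix (Fin l) (Fin l) ℕ} (φ : SigmaA l A → ℝ) (P : ℝ)
    (μ : Measure (SigmaA l A)) : Prop :=
  ∃ c : ℝ, 1 < c ∧ ∀ (ω : SigmaA l A) (k : ℕ), 0 < k →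
    c⁻¹ ≤ (μ (cylinder A (wordPrefix ω k))).toReal / Real.exp (birkhoff φ k ω - k * P) ∧
      (μ (cylinder A (wordPrefix ω k))).toReal / Real.exp (birkhoff φ k ω - k * P) ≤ c

/-- `φ` is Hölder continuous with respect to the metric `d(ω,υ) = 2^{-(ω ∧ υ)}`:
there are `C` and an exponent `s > 0` with `|φ(ω) − φ(υ)| ≤ C ⬝ d(ω,υ)^s`, i.e.
`|φ(ω) − φ(υ)| ≤ C ⬝ 2^{-sn}` whenever `ω` and `υ` agree in their first `n` coordinates. -/
def HolderCont {A : Matrix (Fin l) (Fin l) ℕ} (φ : SigmaA l A → ℝ) : Prop :=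
  ∃ C s : ℝ, 0 < s ∧ ∀ (ω υ : SigmaA l A) (n : ℕ),
    (∀ i < n, ω.1 i = υ.1 i) → |φ ω - φ υ| ≤ C * (2 : ℝ) ^ (-(s * n))

lemma measurableSet_cylinder (A : Matrix (Fin l) (Fin l) ℕ) (x : List (Fin l)) :
    MeasurableSet (cylinder A x) := by
  have h : cylinder A x = ⋂ i : Fin x.length,
      (fun ω : SigmaA l A => ω.1 i.1) ⁻¹' {x[i.1]'i.2} := by
    ext ω
    simp only [cylinder, Set.mem_setOf_eq, Set.mem_iInter, Set.mem_preimage,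
      Set.mem_singleton_iff]
    exact ⟨fun h i => h i.1 i.2, fun h i hi => h ⟨i, hi⟩⟩
  rw [h]
  exact MeasurableSet.iInter fun i =>
    ((measurable_pi_apply i.1).comp measurable_subtype_coe) (measurableSet_singleton _)

/-- `α(x)`: the number of children of the word `x` (the row sum of `A` at the
last letter of `x`). -/
def alpha (A : Matrix (Fin l) (Fin l) ℕ) (x : List (Fin l)) : ℕ :=
  match x.getLast? with
  | some a => ∑ i, A a i
  | none => 0

/-- The `m`-th child `x θ_x⁻¹(m)` of the word `x`, the ordering of the children
being given by `θinv x`. -/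
def child (θinv : List (Fin l) → ℕ → Fin l) (x : List (Fin l)) (m : ℕ) : List (Fin l) :=
  x ++ [θinv x m]

/-- The characteristic function of the cylinder `[x]`, as an element of `L²(μ)`. -/
noncomputable def cylLp (A : Matrix (Fin l) (Fin l) ℕ) (μ : Measure (SigmaA l A))
    [IsFiniteMeasure μ] (x : List (Fin l)) : Lp ℂ 2 μ :=
  indicatorConstLp 2 (measurableSet_cylinder A x) (measure_ne_top μ _) (1 : ℂ)

/-- The Haar function `e_{x,j} = ∑_m μ([xθ_x⁻¹(m)])^{-1/2} ⟨f_{x,m}, U_x f_{x,j}⟩_x χ_{[xθ_x⁻¹(m)]}`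
as an element of `L²(μ)`; here `u x m j = ⟨f_{x,m}, U_x f_{x,j}⟩_x` are the matrix
coefficients of `U_x` in the orthonormal basis `(f_{x,m})_m`. -/
noncomputable def haarLp (A : Matrix (Fin l) (Fin l) ℕ) (μ : Measure (SigmaA l A))
    [IsFiniteMeasure μ] (θinv : List (Fin l) → ℕ → Fin l) (u : List (Fin l) → ℕ → ℕ → ℝ)
    (x : List (Fin l)) (j : ℕ) : Lp ℂ 2 μ :=
  ∑ m ∈ Finset.range (alpha A x),
    ((((Real.sqrt ((μ (cylinder A (child θinv x m))).toReal))⁻¹ * u x m j : ℝ) : ℂ)) •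
      cylLp A μ (child θinv x m)

/-- The Haar family `𝓗`: the functions `e_{x,j}` for admissible `x` and
`1 ≤ j ≤ α(x) − 1` (here indexed by `0 ≤ j < α(x) − 1`), together with the
normalised characteristic functions `μ([a])^{-1/2} χ_{[a]}` of the length-one cylinders. -/
noncomputable def haarSet (A : Matrix (Fin l) (Fin l) ℕ) (μ : Measure (SigmaA l A))
    [IsFiniteMeasure μ] (θinv : List (Fin l) → ℕ → Fin l) (u : List (Fin l) → ℕ → ℕ → ℝ) :
    Set (Lp ℂ 2 μ) :=
  {f | ∃ x j, Admissible A x ∧ j + 1 < alpha A x ∧ f = haarLp A μ θinv u x j} ∪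
    {f | ∃ a : Fin l,
      f = (((Real.sqrt ((μ (cylinder A [a])).toReal))⁻¹ : ℝ) : ℂ) • cylLp A μ [a]}

section Aux

variable {A : Matrix (Fin l) (Fin l) ℕ}

lemma exists_succ (hA : Primitive A) (a : Fin l) : ∃ b, A a b = 1 := by
  obtain ⟨h01, n, hn, hpos⟩ := hA
  obtain ⟨m, rfl⟩ := Nat.exists_eq_add_of_lt hn
  have hp := hpos a a
  rw [pow_succ'] at hp
  have : ∑ k, A a k * (A ^ (0 + m)) k a ≠ 0 := by
    simpa [Matrix.mul_apply] using hp.ne'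
  obtain ⟨k, _, hk⟩ := Finset.exists_ne_zero_of_sum_ne_zero this
  have hk1 : A a k ≠ 0 := fun h => hk (by simp [h])
  exact ⟨k, (h01 a k).resolve_left hk1⟩

/-- a choice of successor letter -/
noncomputable def nextL (hA : Primitive A) (a : Fin l) : Fin l :=
  (exists_succ hA a).choose

lemma nextL_spec (hA : Primitive A) (a : Fin l) : A a (nextL hA a) = 1 :=
  (exists_succ hA a).choose_spec

lemma exists_extension (hA : Primitive A) {x : List (Fin l)} (hx : Admissible A x) :
    ∃ ω : SigmaA l A, ∀ i (h : i < x.length), ω.1 i = x[i] := by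
  have h0 : 0 < x.length := List.length_pos_iff.mpr hx.1
  let f : ℕ → Fin l := fun n => Nat.rec (x[0]'h0)
    (fun n fn => if h : n + 1 < x.length then x[n + 1]'h else nextL hA fn) n
  have hf : ∀ i (h : i < x.length), f i = x[i]'h := by
    intro i h
    cases i with
    | zero => rfl
    | succ n => simp only [f]; rw [dif_pos h]
  refine ⟨⟨f, ?_⟩, hf⟩
  intro k
  by_cases h : k + 1 < x.length
  · have hk : k < x.length := by omega
    have : f (k + 1) = x[k + 1]'h := hf _ h
    rw [this, hf k hk]
    exact hx.2 k h
  · have : f (k + 1) = nextL hA (f k) := by simp only [f]; rw [dif_neg h]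
    rw [this]
    exact nextL_spec hA (f k)

lemma cyl_pos {φ : SigmaA l A → ℝ} {P : ℝ} {μ : Measure (SigmaA l A)}
    (hGibbs : IsGibbs φ P μ) (hA : Primitive A) {x : List (Fin l)}
    (hx : Admissible A x) : 0 < (μ (cylinder A x)).toReal := by
  obtain ⟨ω, hω⟩ := exists_extension hA hx
  obtain ⟨c, hc, H⟩ := hGibbs
  have h0 : 0 < x.length := List.length_pos_iff.mpr hx.1
  have hpre : wordPrefix ω x.length = x := by
    apply List.ext_getElem
    · simp [wordPrefix]
    · intro i h1 h2
      simp only [wordPrefix, List.getElem_ofFn]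
      exact hω i h2
  have := (H ω x.length h0).1
  rw [hpre] at this
  have hcinv : (0 : ℝ) < c⁻¹ := inv_pos.mpr (lt_trans one_pos hc)
  have hdiv : 0 < (μ (cylinder A x)).toReal /
      Real.exp (birkhoff φ x.length ω - x.length * P) := lt_of_lt_of_le hcinv this
  have he : 0 < Real.exp (birkhoff φ x.length ω - x.length * P) := Real.exp_pos _
  rcases div_pos_iff.mp hdiv with ⟨h, _⟩ | ⟨_, h⟩
  · exact h
  · exact absurd h (not_lt.mpr he.le)

lemma sqrt_cyl_ne_zero {φ : SigmaA l A → ℝ} {P : ℝ} {μ : Measure (SigmaA l A)}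
    (hGibbs : IsGibbs φ P μ) (hA : Primitive A) {x : List (Fin l)}
    (hx : Admissible A x) : Real.sqrt ((μ (cylinder A x)).toReal) ≠ 0 :=
  (Real.sqrt_pos.mpr (cyl_pos hGibbs hA hx)).ne'

lemma admissible_concat {x : List (Fin l)} (hx : Admissible A x) (b : Fin l)
    (hb : A (x.getLast hx.1) b = 1) : Admissible A (x ++ [b]) := by
  refine ⟨by simp, ?_⟩
  intro i h
  have hlen : (x ++ [b]).length = x.length + 1 := by simp
  rw [hlen] at h
  by_cases hi : i + 1 < x.length
  · have h1 : i < x.length := by omega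
    rw [List.getElem_append_left h1, List.getElem_append_left hi]
    exact hx.2 i hi
  · have hieq : i + 1 = x.length := by omega
    have h1 : i < x.length := by omega
    rw [List.getElem_append_left h1, List.getElem_concat_length hieq]
    have : x.getLast hx.1 = x[i]'h1 := by
      rw [List.getLast_eq_getElem]
      congr 1
      omega
    rw [← this]
    exact hb

lemma concat_admissible_elim {y : List (Fin l)} {b : Fin l} (hy_ne : y ≠ [])
    (h : Admissible A (y ++ [b])) : Admissible A y ∧ A (y.getLast hy_ne) b = 1 := by
  have hlen : (y ++ [b]).length = y.length + 1 := by simp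
  have hylen : 0 < y.length := List.length_pos_iff.mpr hy_ne
  constructor
  · refine ⟨hy_ne, ?_⟩
    intro i hi
    have h1 : i + 1 < (y ++ [b]).length := by omega
    have := h.2 i h1
    rwa [List.getElem_append_left (by omega : i < y.length),
      List.getElem_append_left hi] at this
  · have h1 : (y.length - 1) + 1 < (y ++ [b]).length := by omega
    have := h.2 (y.length - 1) h1
    rw [List.getElem_append_left (by omega : y.length - 1 < y.length)] at this
    have h2 : (y.length - 1) + 1 = y.length := by omega
    rw [List.getElem_concat_length h2] at this
    rwa [List.getLast_eq_getElem]

lemma alpha_eq {x : List (Fin l)} (hx : x ≠ []) :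
    alpha A x = ∑ i, A (x.getLast hx) i := by
  rw [alpha, List.getLast?_eq_getLast_of_ne_nil hx]

lemma alpha_pos (hA : Primitive A) {x : List (Fin l)} (hx : Admissible A x) :
    0 < alpha A x := by
  rw [alpha_eq hx.1]
  obtain ⟨b, hb⟩ := exists_succ hA (x.getLast hx.1)
  calc 0 < A (x.getLast hx.1) b := by omega
  _ ≤ ∑ i, A (x.getLast hx.1) i :=
    Finset.single_le_sum (fun i _ => Nat.zero_le _) (Finset.mem_univ b)

variable {θinv : List (Fin l) → ℕ → Fin l}

lemma child_admissible {x : List (Fin l)} (hx : Admissible A x)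
    (hθ : Set.BijOn (θinv x) (Set.Iio (alpha A x)) {y : Fin l | A (x.getLast hx.1) y = 1})
    {m : ℕ} (hm : m < alpha A x) : Admissible A (child θinv x m) :=
  admissible_concat hx _ (hθ.mapsTo hm)

lemma child_eq (x : List (Fin l)) (m : ℕ) : child θinv x m = x ++ [θinv x m] := rfl

lemma child_cyl_subset {x : List (Fin l)} (m : ℕ) :
    cylinder A (child θinv x m) ⊆ cylinder A x := by
  intro ω hω i hi
  have h2 : i < (child θinv x m).length := by simp [child]; omega
  have := hω i h2
  rwa [List.getElem_of_eq (child_eq x m), List.getElem_append_left hi] at this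

lemma mem_child_cyl_iff {x : List (Fin l)} {m : ℕ} {ω : SigmaA l A} :
    ω ∈ cylinder A (child θinv x m) ↔ ω ∈ cylinder A x ∧ ω.1 x.length = θinv x m := by
  constructor
  · intro hω
    refine ⟨child_cyl_subset m hω, ?_⟩
    have h2 : x.length < (child θinv x m).length := by simp [child]
    have := hω x.length h2
    rwa [List.getElem_of_eq (child_eq x m), List.getElem_concat_length rfl] at this
  · rintro ⟨h1, h2⟩
    intro i hi
    have hi' : i < x.length + 1 := by simpa [child] using hi
    rw [List.getElem_of_eq (child_eq x m)]
    by_cases h : i < x.length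
    · rw [List.getElem_append_left h]; exact h1 i h
    · have : i = x.length := by omega
      subst this
      rw [List.getElem_concat_length rfl]
      exact h2

lemma cyl_partition {x : List (Fin l)} (hx : Admissible A x)
    (hθ : Set.BijOn (θinv x) (Set.Iio (alpha A x)) {y : Fin l | A (x.getLast hx.1) y = 1})
    (ω : SigmaA l A) (hω : ω ∈ cylinder A x) :
    ∃ m < alpha A x, ω ∈ cylinder A (child θinv x m) ∧
      ∀ m' < alpha A x, ω ∈ cylinder A (child θinv x m') → m' = m := by
  have h0 : 0 < x.length := List.length_pos_iff.mpr hx.1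
  have hb : A (x.getLast hx.1) (ω.1 x.length) = 1 := by
    have := ω.2 (x.length - 1)
    have heq : ω.1 (x.length - 1) = x[x.length - 1]'(by omega) := hω _ (by omega)
    have h2 : x.length - 1 + 1 = x.length := by omega
    rw [h2] at this
    rw [List.getLast_eq_getElem, ← heq]
    exact this
  obtain ⟨m, hm, hθm⟩ := hθ.surjOn hb
  refine ⟨m, hm, mem_child_cyl_iff.mpr ⟨hω, hθm.symm⟩, ?_⟩
  intro m' hm' hω'
  have h2 := (mem_child_cyl_iff.mp hω').2
  exact hθ.injOn hm' hm (by rw [← h2, ← hθm])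

variable {μ : Measure (SigmaA l A)} [IsProbabilityMeasure μ]

lemma coeFn_sum_Lp {ι : Type*} (s : Finset ι) (f : ι → Lp ℂ 2 μ) :
    ⇑(∑ i ∈ s, f i) =ᵐ[μ] fun a => ∑ i ∈ s, f i a := by
  classical
  induction s using Finset.induction_on with
  | empty => simp only [Finset.sum_empty]; exact Lp.coeFn_zero (E := ℂ) (p := 2) (μ := μ)
  | @insert i s hi ih =>
    rw [Finset.sum_insert hi]
    refine (Lp.coeFn_add _ _).trans ?_
    filter_upwards [ih] with a ha
    simp only [Pi.add_apply, ha, Finset.sum_insert hi]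

lemma cylLp_eq_sum_children {x : List (Fin l)} (hx : Admissible A x)
    (hθ : Set.BijOn (θinv x) (Set.Iio (alpha A x)) {y : Fin l | A (x.getLast hx.1) y = 1}) :
    cylLp A μ x = ∑ m ∈ Finset.range (alpha A x), cylLp A μ (child θinv x m) := by
  apply Lp.ext
  have h1 := indicatorConstLp_coeFn (p := 2) (μ := μ)
    (hs := measurableSet_cylinder A x) (hμs := measure_ne_top μ _) (c := (1 : ℂ))
  have h2 := coeFn_sum_Lp (Finset.range (alpha A x)) (fun m => cylLp A μ (child θinv x m))
  refine h1.trans (EventuallyEq.trans ?_ h2.symm)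
  have h3 : ∀ᵐ a ∂μ, ∀ m ∈ Finset.range (alpha A x),
      cylLp A μ (child θinv x m) a =
        (cylinder A (child θinv x m)).indicator (fun _ => (1 : ℂ)) a := by
    rw [Filter.eventually_all_finset]
    intro m _
    exact indicatorConstLp_coeFn
  filter_upwards [h3] with ω hω
  rw [Finset.sum_congr rfl hω]
  by_cases hmem : ω ∈ cylinder A x
  · obtain ⟨m, hm, hωm, huniq⟩ := cyl_partition hx hθ ω hmem
    rw [Set.indicator_of_mem hmem,
      Finset.sum_eq_single_of_mem m (Finset.mem_range.mpr hm)
        (fun m' hm' hne => Set.indicator_of_notMem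
          (fun hcon => hne (huniq m' (Finset.mem_range.mp hm') hcon)) _),
      Set.indicator_of_mem hωm]
  · rw [Set.indicator_of_notMem hmem]
    symm
    apply Finset.sum_eq_zero
    intro m _
    exact Set.indicator_of_notMem (fun h => hmem (child_cyl_subset m h)) _

lemma rows_orth {u : List (Fin l) → ℕ → ℕ → ℝ} {x : List (Fin l)}
    (hu : ∀ j < alpha A x, ∀ j' < alpha A x,
      ∑ m ∈ Finset.range (alpha A x), u x m j * u x m j' = if j = j' then 1 else 0)
    {m m' : ℕ} (hm : m < alpha A x) (hm' : m' < alpha A x) :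
    ∑ j ∈ Finset.range (alpha A x), u x m j * u x m' j = if m = m' then 1 else 0 := by
  set α := alpha A x
  let M : Matrix (Fin α) (Fin α) ℝ := fun i j => u x i j
  have h1 : M.transpose * M = 1 := by
    ext j j'
    rw [Matrix.mul_apply]
    simp only [Matrix.transpose_apply]; simp only [M]
    rw [Fin.sum_univ_eq_sum_range (fun i => u x i j.1 * u x i j'.1)]
    rw [hu j.1 j.2 j'.1 j'.2]
    simp [Matrix.one_apply, Fin.ext_iff]
  have h2 : M * M.transpose = 1 := mul_eq_one_comm.mp h1
  have h3 := congrFun (congrFun h2 ⟨m, hm⟩) ⟨m', hm'⟩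
  rw [Matrix.mul_apply] at h3
  simp only [Matrix.transpose_apply] at h3; simp only [M] at h3
  rw [Fin.sum_univ_eq_sum_range (fun j => u x m j * u x m' j)] at h3
  rw [h3]
  simp [Matrix.one_apply, Fin.ext_iff]

lemma child_combination {u : List (Fin l) → ℕ → ℕ → ℝ} {x : List (Fin l)}
    (hu : ∀ j < alpha A x, ∀ j' < alpha A x,
      ∑ m ∈ Finset.range (alpha A x), u x m j * u x m j' = if j = j' then 1 else 0)
    {m : ℕ} (hm : m < alpha A x) :
    ∑ j ∈ Finset.range (alpha A x), ((u x m j : ℝ) : ℂ) • haarLp A μ θinv u x j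
      = (((Real.sqrt ((μ (cylinder A (child θinv x m))).toReal))⁻¹ : ℝ) : ℂ) •
        cylLp A μ (child θinv x m) := by
  have key : ∀ m' < alpha A x,
      (∑ j ∈ Finset.range (alpha A x),
        u x m j * ((Real.sqrt ((μ (cylinder A (child θinv x m'))).toReal))⁻¹ * u x m' j))
      = if m = m' then (Real.sqrt ((μ (cylinder A (child θinv x m'))).toReal))⁻¹ else 0 := by
    intro m' hm'
    have : ∀ j, u x m j * ((Real.sqrt ((μ (cylinder A (child θinv x m'))).toReal))⁻¹
        * u x m' j) = (Real.sqrt ((μ (cylinder A (child θinv x m'))).toReal))⁻¹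
        * (u x m j * u x m' j) := fun j => by ring
    simp_rw [this]
    rw [← Finset.mul_sum, rows_orth hu hm hm', mul_ite, mul_one, mul_zero]
  simp only [haarLp, Finset.smul_sum, smul_smul]
  rw [Finset.sum_comm]
  rw [Finset.sum_eq_single_of_mem m (Finset.mem_range.mpr hm)]
  · rw [← Finset.sum_smul]
    congr 1
    have hk := key m hm
    rw [if_pos rfl] at hk
    exact_mod_cast hk
  · intro m' hm' hne
    rw [← Finset.sum_smul]
    have hk := key m' (Finset.mem_range.mp hm')
    rw [if_neg (Ne.symm hne)] at hk
    have : (∑ j ∈ Finset.range (alpha A x), ((u x m j : ℝ) : ℂ) *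
        ((((Real.sqrt ((μ (cylinder A (child θinv x m'))).toReal))⁻¹ * u x m' j : ℝ) : ℂ)))
        = 0 := by exact_mod_cast hk
    rw [this, zero_smul]

lemma haarLp_last {φ : SigmaA l A → ℝ} {P : ℝ} (hGibbs : IsGibbs φ P μ) (hA : Primitive A)
    {u : List (Fin l) → ℕ → ℕ → ℝ} {x : List (Fin l)} (hx : Admissible A x)
    (hθ : Set.BijOn (θinv x) (Set.Iio (alpha A x)) {y : Fin l | A (x.getLast hx.1) y = 1})
    (hu_last : ∀ m < alpha A x,
      u x m (alpha A x - 1) =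
        (Real.sqrt ((μ (cylinder A x)).toReal))⁻¹ *
          Real.sqrt ((μ (cylinder A (child θinv x m))).toReal)) :
    haarLp A μ θinv u x (alpha A x - 1) =
      (((Real.sqrt ((μ (cylinder A x)).toReal))⁻¹ : ℝ) : ℂ) • cylLp A μ x := by
  rw [cylLp_eq_sum_children hx hθ, Finset.smul_sum, haarLp]
  apply Finset.sum_congr rfl
  intro m hm
  rw [Finset.mem_range] at hm
  rw [hu_last m hm]
  congr 1
  have hs : Real.sqrt ((μ (cylinder A (child θinv x m))).toReal) ≠ 0 :=
    sqrt_cyl_ne_zero hGibbs hA (child_admissible hx hθ hm)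
  have hr : (Real.sqrt ((μ (cylinder A (child θinv x m))).toReal))⁻¹ *
      ((Real.sqrt ((μ (cylinder A x)).toReal))⁻¹ *
        Real.sqrt ((μ (cylinder A (child θinv x m))).toReal))
      = (Real.sqrt ((μ (cylinder A x)).toReal))⁻¹ := by
    rw [mul_comm ((Real.sqrt ((μ (cylinder A x)).toReal))⁻¹), ← mul_assoc,
      inv_mul_cancel₀ hs, one_mul]
  exact_mod_cast hr

end Aux

/-- For every `x ∈ Σ_A^*`, the characteristic function `χ_{[x]}` is a finite
complex linear combination of elements of the Haar family `𝓗`. -/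
theorem indicator_cylinder_mem_span_haar
    (hl : 2 ≤ l) (A : Matrix (Fin l) (Fin l) ℕ) (hA : Primitive A)
    (φ : SigmaA l A → ℝ) (hφ : HolderCont φ) (P : ℝ)
    (μ : Measure (SigmaA l A)) [IsProbabilityMeasure μ] (hGibbs : IsGibbs φ P μ)
    (θinv : List (Fin l) → ℕ → Fin l)
    (hθ : ∀ (x : List (Fin l)) (hx : Admissible A x),
      Set.BijOn (θinv x) (Set.Iio (alpha A x)) {y : Fin l | A (x.getLast hx.1) y = 1})
    (u : List (Fin l) → ℕ → ℕ → ℝ)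
    (hu_orth : ∀ x, Admissible A x → ∀ j < alpha A x, ∀ j' < alpha A x,
      ∑ m ∈ Finset.range (alpha A x), u x m j * u x m j' = if j = j' then 1 else 0)
    (hu_last : ∀ x, Admissible A x → ∀ m < alpha A x,
      u x m (alpha A x - 1) =
        (Real.sqrt ((μ (cylinder A x)).toReal))⁻¹ *
          Real.sqrt ((μ (cylinder A (child θinv x m))).toReal)) :
    ∀ x : List (Fin l), Admissible A x →
      cylLp A μ x ∈ Submodule.span ℂ (haarSet A μ θinv u) := by
  suffices H : ∀ n, ∀ x : List (Fin l), Admissible A x → x.length = n →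
      cylLp A μ x ∈ Submodule.span ℂ (haarSet A μ θinv u) by
    intro x hx; exact H x.length x hx rfl
  intro n
  induction n using Nat.strong_induction_on with
  | _ n ih =>
    intro x hx hlen
    have h0 : 0 < x.length := List.length_pos_iff.mpr hx.1
    rcases Nat.lt_or_ge n 2 with h2 | h2
    · -- base case: length-one words
      have hn1 : x.length = 1 := by omega
      obtain ⟨a, rfl⟩ := List.length_eq_one_iff.mp hn1
      have hs := sqrt_cyl_ne_zero hGibbs hA hx
      have hrw : cylLp A μ [a] = ((Real.sqrt ((μ (cylinder A [a])).toReal) : ℝ) : ℂ) •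
          ((((Real.sqrt ((μ (cylinder A [a])).toReal))⁻¹ : ℝ) : ℂ) • cylLp A μ [a]) := by
        rw [smul_smul, ← Complex.ofReal_mul, mul_inv_cancel₀ hs]
        simp
      rw [hrw]
      exact Submodule.smul_mem _ _ (Submodule.subset_span (Or.inr ⟨a, rfl⟩))
    · -- inductive step
      set y := x.dropLast with hy
      have hylen : y.length = n - 1 := by rw [hy, List.length_dropLast, hlen]
      have hyne : y ≠ [] := by
        intro h
        rw [h] at hylen
        simp at hylen
        omega
      have hxe : y ++ [x.getLast hx.1] = x := List.dropLast_append_getLast hx.1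
      obtain ⟨hyadm, hblast⟩ := concat_admissible_elim hyne (by rw [hxe]; exact hx)
      obtain ⟨m, hm, hθm⟩ := (hθ y hyadm).surjOn hblast
      have hm' : m < alpha A y := hm
      have hxc : child θinv y m = x := by rw [child_eq, hθm]; exact hxe
      have hspan : ∀ j < alpha A y,
          haarLp A μ θinv u y j ∈ Submodule.span ℂ (haarSet A μ θinv u) := by
        intro j hj
        rcases Nat.lt_or_ge (j + 1) (alpha A y) with hlt | hge
        · exact Submodule.subset_span (Or.inl ⟨y, j, hyadm, hlt, rfl⟩)
        · have hje : j = alpha A y - 1 := by omega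
          rw [hje, haarLp_last hGibbs hA hyadm (hθ y hyadm) (hu_last y hyadm)]
          exact Submodule.smul_mem _ _ (ih y.length (by omega) y hyadm rfl)
      have hkey := child_combination (μ := μ) (θinv := θinv) (hu_orth y hyadm) hm'
      rw [hxc] at hkey
      have hs := sqrt_cyl_ne_zero hGibbs hA hx
      have hrw : cylLp A μ x = ((Real.sqrt ((μ (cylinder A x)).toReal) : ℝ) : ℂ) •
          ∑ j ∈ Finset.range (alpha A y), ((u y m j : ℝ) : ℂ) • haarLp A μ θinv u y j := by
        rw [hkey, smul_smul, ← Complex.ofReal_mul, mul_inv_cancel₀ hs]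
        simp
      rw [hrw]
      exact Submodule.smul_mem _ _ (Submodule.sum_mem _ (fun j hj =>
        Submodule.smul_mem _ _ (hspan j (Finset.mem_range.mp hj))))

end SFT
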